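/- Let n ≥ 3 and let s ≥ 1, t ≥ 0 be integers. For λ ∈ ℝ^{n−1} and integers s' ≥ 0, define Y_{s',t}(λ) = Σ_{i=0}^{t} C(t,i) H_{s'+2t−2i}(λ). If λ satisfies σ_m(λ) ≥ 0 for all 1 ≤ m ≤ min(s+2t+2, n−1), then Y_{s,t}(λ)·Y_{s+1,t}(λ) ≥ Y_{s−1,t}(λ)·Y_{s+2,t}(λ). -/

import Mathlib

open Multiset Polynomial

/-- The `k`-th elementary symmetric polynomial of `x ∈ ℝ^m`
(`σ_0 = 1`, `σ_k = 0` for `k > m`). -/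
noncomputable def esymmR (m : ℕ) (x : Fin m → ℝ) (k : ℕ) : ℝ :=
  ∑ s ∈ Finset.powersetCard k (Finset.univ : Finset (Fin m)), ∏ i ∈ s, x i

/-- The normalized `k`-th elementary symmetric function `H_k = σ_k / C(m,k)`
(`H_0 = 1`, `H_k = 0` for `k > m`). -/
noncomputable def Hnorm (m : ℕ) (x : Fin m → ℝ) (k : ℕ) : ℝ :=
  esymmR m x k / (m.choose k : ℝ)

/-- The point of `ℝ^{m-1}` obtained from `x ∈ ℝ^m` by deleting the `p`-th coordinate. -/
def deleteCoord {m : ℕ} (x : Fin m → ℝ) (p : Fin m) : Fin (m - 1) → ℝ :=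
  fun i => if (i : ℕ) < (p : ℕ) then x ⟨(i : ℕ), by have := i.isLt; omega⟩
           else x ⟨(i : ℕ) + 1, by have := i.isLt; omega⟩

/-- `Y_{s,t}(λ) = Σ_{i=0}^{t} C(t,i) H_{s+2t−2i}(λ)`. -/
noncomputable def Yst (m : ℕ) (x : Fin m → ℝ) (s t : ℕ) : ℝ :=
  ∑ i ∈ Finset.range (t + 1), (t.choose i : ℝ) * Hnorm m x (s + 2 * t - 2 * i)



lemma myEsymm_zero (s : Multiset ℝ) : s.esymm 0 = 1 := by
  simp [Multiset.esymm]

lemma myEsymm_of_lt (s : Multiset ℝ) {j : ℕ} (h : Multiset.card s < j) : s.esymm j = 0 := by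
  simp [Multiset.esymm, Multiset.powersetCard_eq_empty _ h]

lemma myEsymm_cons (a : ℝ) (s : Multiset ℝ) (k : ℕ) :
    (a ::ₘ s).esymm (k + 1) = s.esymm (k + 1) + a * s.esymm k := by
  simp only [Multiset.esymm, Multiset.powersetCard_cons, Multiset.map_add, Multiset.sum_add,
    Multiset.map_map]
  congr 1
  rw [← Multiset.sum_map_mul_left]
  congr 1
  apply Multiset.map_congr rfl
  intro t _
  simp [Multiset.prod_cons]

lemma myEsymm_self (s : Multiset ℝ) : s.esymm (Multiset.card s) = s.prod := by
  induction s using Multiset.induction with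
  | empty => simp [myEsymm_zero]
  | cons a s ih =>
    rw [Multiset.card_cons, myEsymm_cons, myEsymm_of_lt s (by simp), ih, Multiset.prod_cons]
    ring

lemma myEsymm_inv (s : Multiset ℝ) (h0 : (0:ℝ) ∉ s) :
    ∀ j k, j + k = Multiset.card s → (s.map (·⁻¹)).esymm j * s.prod = s.esymm k := by
  induction s using Multiset.induction with
  | empty =>
    intro j k hjk
    simp at hjk
    simp [hjk.1, hjk.2, myEsymm_zero]
  | cons a s ih =>
    have ha : a ≠ 0 := fun h => h0 (h ▸ Multiset.mem_cons_self a s)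
    have h0' : (0:ℝ) ∉ s := fun h => h0 (Multiset.mem_cons_of_mem h)
    intro j k hjk
    rw [Multiset.card_cons] at hjk
    rw [Multiset.map_cons, Multiset.prod_cons]
    match j, k, hjk with
    | 0, k, hjk =>
      have hk : k = Multiset.card s + 1 := by omega
      subst hk
      rw [myEsymm_zero, myEsymm_cons, myEsymm_of_lt s (by simp), myEsymm_self]
      ring
    | (j+1), k, hjk =>
      rw [myEsymm_cons]
      rcases Nat.eq_zero_or_pos k with hk | hk
      · subst hk
        -- j + 1 = card s + 1, full product of inverses
        have hj : j = Multiset.card s := by omega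
        rw [myEsymm_of_lt (s.map (·⁻¹)) (by simp [hj]), myEsymm_zero]
        have := ih h0' j 0 (by omega)
        rw [myEsymm_zero] at this
        calc (0 + a⁻¹ * (Multiset.map (·⁻¹) s).esymm j) * (a * s.prod)
            = (a⁻¹ * a) * ((Multiset.map (·⁻¹) s).esymm j * s.prod) := by ring
          _ = 1 := by rw [this, inv_mul_cancel₀ ha]; ring
      · obtain ⟨k', rfl⟩ : ∃ k', k = k' + 1 := ⟨k - 1, by omega⟩
        have h1 := ih h0' (j+1) k' (by omega)
        have h2 := ih h0' j (k'+1) (by omega)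
        rw [myEsymm_cons]
        calc ((Multiset.map (·⁻¹) s).esymm (j+1) + a⁻¹ * (Multiset.map (·⁻¹) s).esymm j) * (a * s.prod)
            = a * ((Multiset.map (·⁻¹) s).esymm (j+1) * s.prod)
              + (a⁻¹ * a) * ((Multiset.map (·⁻¹) s).esymm j * s.prod) := by ring
          _ = s.esymm (k'+1) + a * s.esymm k' := by
              rw [h1, h2, inv_mul_cancel₀ ha]; ring



lemma deriv_step (r : Multiset ℝ) (hd : 1 ≤ Multiset.card r) :
    ∃ s : Multiset ℝ, Multiset.card s = Multiset.card r - 1 ∧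
      ∀ j ≤ Multiset.card r - 1,
        (Multiset.card r : ℝ) * s.esymm j = ((Multiset.card r : ℝ) - j) * r.esymm j := by
  classical
  obtain ⟨d, hdd⟩ : ∃ d, Multiset.card r = d := ⟨_, rfl⟩
  rw [hdd] at hd ⊢
  set p : Polynomial ℝ := (r.map (fun a => X + C a)).prod with hp
  have hform : (r.map (fun a => X + C a)) = ((r.map Neg.neg).map (fun a => X - C a)) := by
    rw [Multiset.map_map]
    apply Multiset.map_congr rfl
    intro a _
    simp [sub_neg_eq_add]
  have hroots : p.roots = r.map Neg.neg := by
    rw [hp, hform, Polynomial.roots_multiset_prod_X_sub_C]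
  have hmonic : p.Monic := by
    rw [hp]
    apply monic_multiset_prod_of_monic
    intro a _
    exact monic_X_add_C a
  have hdeg : p.natDegree = d := by
    rw [hp, hform, natDegree_multiset_prod_X_sub_C_eq_card]
    simp [hdd]
  have hqdeg : (derivative p).natDegree = d - 1 := by
    have h1 := Polynomial.degree_derivative_eq p (by omega)
    rw [hdeg] at h1
    exact natDegree_eq_of_degree_eq_some h1
  have hqcardge : d - 1 ≤ Multiset.card (derivative p).roots := by
    have h1 := Polynomial.card_roots_le_derivative p
    rw [hroots] at h1
    simp only [Multiset.card_map, hdd] at h1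
    omega
  have hqcard : Multiset.card (derivative p).roots = (derivative p).natDegree := by
    have h2 := Polynomial.card_roots' (derivative p)
    omega
  have hqlead : (derivative p).leadingCoeff = (d : ℝ) := by
    rw [Polynomial.leadingCoeff, hqdeg]
    rw [Polynomial.coeff_derivative]
    have h2 : d - 1 + 1 = d := by omega
    rw [h2, show p.coeff d = 1 from hdeg ▸ hmonic.coeff_natDegree]
    have h3 : ((d - 1 : ℕ) : ℝ) = (d : ℝ) - 1 := by
      rw [Nat.cast_sub (by omega)]; norm_num
    rw [h3]; ring
  refine ⟨(derivative p).roots.map Neg.neg, by simp [hqcard, hqdeg], ?_⟩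
  intro j hj
  have hk : d - 1 - j ≤ (derivative p).natDegree := by omega
  have hco := Polynomial.coeff_eq_esymm_roots_of_card hqcard hk
  have hpow : (derivative p).natDegree - (d - 1 - j) = j := by omega
  have hco2 : (derivative p).coeff (d - 1 - j) = p.coeff (d - 1 - j + 1) * ((d : ℝ) - j) := by
    rw [Polynomial.coeff_derivative]
    congr 1
    rw [show ((d - 1 - j : ℕ) : ℝ) = (d:ℝ) - 1 - j by
      rw [show d - 1 - j = d - (1 + j) by omega, Nat.cast_sub (by omega)]; push_cast; ring]
    ring
  have hpcoeff : p.coeff (d - 1 - j + 1) = r.esymm j := by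
    rw [hp, Multiset.prod_X_add_C_coeff r (show d - 1 - j + 1 ≤ Multiset.card r by omega)]
    congr 1
    omega
  have hesymmneg : (derivative p).roots.esymm j =
      (-1)^j * ((derivative p).roots.map Neg.neg).esymm j := by
    have h4 : (derivative p).roots = ((derivative p).roots.map Neg.neg).map Neg.neg := by
      rw [Multiset.map_map]; simp
    conv_lhs => rw [h4]
    rw [Multiset.esymm_neg]
  rw [hpow, hesymmneg, hqlead, hco2, hpcoeff] at hco
  have hsq : ((-1:ℝ))^j * ((-1:ℝ))^j = 1 := by
    rw [← pow_add, ← two_mul, pow_mul]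
    norm_num
  linear_combination (-1 : ℝ) * hco - ((d:ℝ) * ((derivative p).roots.map Neg.neg).esymm j) * hsq



noncomputable def Hms (r : Multiset ℝ) (j : ℕ) : ℝ :=
  r.esymm j / ((Multiset.card r).choose j : ℝ)


lemma myEsymm_one (s : Multiset ℝ) : s.esymm 1 = s.sum := by
  rw [Multiset.esymm, Multiset.powersetCard_one, Multiset.map_map]
  simp

lemma choose_identity (d j : ℕ) (h : j + 1 ≤ d) :
    (d - j) * d.choose j = d * (d-1).choose j := by
  have h1 := Nat.choose_succ_right_eq d j
  have h2 := Nat.add_one_mul_choose_eq (d-1) j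
  have h3 : d - 1 + 1 = d := by omega
  rw [h3] at h2
  calc (d - j) * d.choose j = d.choose j * (d - j) := mul_comm _ _
    _ = d.choose (j+1) * (j+1) := h1.symm
    _ = d * (d-1).choose j := by rw [h2]

lemma reduce_step (n : ℕ) : ∀ (r : Multiset ℝ) (c : ℕ), Multiset.card r = c + n →
    ∃ s : Multiset ℝ, Multiset.card s = c ∧ ∀ j ≤ c, Hms s j = Hms r j := by
  induction n with
  | zero => exact fun r c h => ⟨r, by omega, fun _ _ => rfl⟩
  | succ n ih =>
    intro r c hc
    obtain ⟨s1, hs1card, hs1⟩ := deriv_step r (by omega)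
    obtain ⟨s, hscard, hs⟩ := ih s1 c (by omega)
    refine ⟨s, hscard, fun j hj => ?_⟩
    rw [hs j hj]
    have hd : Multiset.card r = c + n + 1 := by omega
    have key := hs1 j (by omega)
    rw [hd] at key
    unfold Hms
    rw [hs1card, hd]
    have h4 : c + n + 1 - 1 = c + n := by omega
    rw [h4]
    have hch1 : (0:ℝ) < ((c+n).choose j : ℝ) := by
      exact_mod_cast Nat.choose_pos (by omega)
    have hch2 : (0:ℝ) < ((c+n+1).choose j : ℝ) := by
      exact_mod_cast Nat.choose_pos (by omega)
    rw [div_eq_div_iff hch1.ne' hch2.ne']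
    have hcid := choose_identity (c+n+1) j (by omega)
    rw [h4] at hcid
    have h6 : ((c + n + 1 - j : ℕ) : ℝ) = (c:ℝ)+n+1-j := by
      rw [Nat.cast_sub (by omega)]; push_cast; ring
    have hcidR : (((c:ℝ)+n+1) - j) * ((c+n+1).choose j : ℝ) =
        ((c:ℝ)+n+1) * ((c+n).choose j : ℝ) := by
      rw [← h6]
      exact_mod_cast congrArg (Nat.cast (R := ℝ)) hcid
    push_cast at key
    have hpos : ((c:ℝ)+n+1) ≠ 0 := by positivity
    apply mul_left_cancel₀ hpos
    linear_combination ((c+n+1).choose j : ℝ) * key + r.esymm j * hcidR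

theorem newton_top (u : Multiset ℝ) (k : ℕ) (hk : 1 ≤ k) (hcard : Multiset.card u = k + 1) :
    Hms u (k-1) * Hms u (k+1) ≤ Hms u k ^ 2 := by
  have hself : u.esymm (k+1) = u.prod := by rw [← hcard]; exact myEsymm_self u
  by_cases hP : u.esymm (k+1) = 0
  · have h0 : Hms u (k+1) = 0 := by unfold Hms; rw [hP]; simp
    rw [h0, mul_zero]
    positivity
  · have hprod : u.prod ≠ 0 := by rwa [← hself]
    have h0 : (0:ℝ) ∉ u := fun hmem => hprod (Multiset.prod_eq_zero hmem)
    set v : Multiset ℝ := u.map (·⁻¹) with hv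
    have hvcard : Multiset.card v = k + 1 := by rw [hv, Multiset.card_map, hcard]
    have hI1 : v.esymm 1 * u.prod = u.esymm k := myEsymm_inv u h0 1 k (by omega)
    have hI2 : v.esymm 2 * u.prod = u.esymm (k-1) := myEsymm_inv u h0 2 (k-1) (by omega)
    obtain ⟨w, hwcard, hw⟩ := reduce_step (k - 1) v 2 (by omega)
    obtain ⟨x, y, hxy⟩ := Multiset.card_eq_two.mp hwcard
    -- Hms w values
    have hw0 : Hms w 0 = 1 := by unfold Hms; rw [myEsymm_zero, hwcard]; simp
    have hw1 : Hms w 1 = (x + y) / 2 := by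
      unfold Hms; rw [hwcard, hxy, myEsymm_one]; simp
    have hw2 : Hms w 2 = x * y := by
      unfold Hms
      rw [hwcard, hxy, show (2:ℕ) = Multiset.card ({x,y} : Multiset ℝ) by simp, myEsymm_self]
      simp
    have hquad : Hms w 0 * Hms w 2 ≤ Hms w 1 ^ 2 := by
      rw [hw0, hw1, hw2]
      nlinarith [sq_nonneg (x - y)]
    rw [hw 0 (by omega), hw 1 (by omega), hw 2 (by omega)] at hquad
    -- express Hms v in terms of esymm
    have hv0 : Hms v 0 = 1 := by unfold Hms; rw [myEsymm_zero, hvcard]; simp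
    have hv1 : Hms v 1 = v.esymm 1 / (k+1 : ℝ) := by
      unfold Hms; rw [hvcard, Nat.choose_one_right]; push_cast; ring
    have hv2 : Hms v 2 = v.esymm 2 / ((k+1).choose 2 : ℝ) := by
      unfold Hms; rw [hvcard]
    rw [hv0, hv1, hv2, one_mul] at hquad
    -- multiply by prod^2
    have hsq : u.prod ^ 2 * (v.esymm 2 / ((k+1).choose 2 : ℝ)) ≤
        u.prod ^ 2 * (v.esymm 1 / (k+1:ℝ)) ^ 2 :=
      mul_le_mul_of_nonneg_left hquad (sq_nonneg _)
    have hC2 : (0:ℝ) < ((k+1).choose 2 : ℝ) := by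
      exact_mod_cast Nat.choose_pos (by omega)
    have e1 : u.prod ^ 2 * (v.esymm 2 / ((k+1).choose 2 : ℝ)) =
        u.esymm (k-1) * u.prod / ((k+1).choose 2 : ℝ) := by
      rw [← hI2]; ring
    have e2 : u.prod ^ 2 * (v.esymm 1 / (k+1:ℝ)) ^ 2 = (u.esymm k / (k+1:ℝ)) ^ 2 := by
      rw [← hI1]; ring
    rw [e1, e2] at hsq
    -- now rewrite the goal
    unfold Hms
    rw [hcard]
    rw [show (k+1).choose (k+1) = 1 from Nat.choose_self _,
        show (k+1).choose k = k+1 from Nat.choose_succ_self_right _,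
        show (k+1).choose (k-1) = (k+1).choose 2 by
          rw [show k - 1 = (k+1) - 2 by omega]; exact Nat.choose_symm (by omega)]
    calc u.esymm (k-1) / ((k+1).choose 2 : ℝ) * (u.esymm (k+1) / ((1:ℕ):ℝ))
        = u.esymm (k-1) * u.prod / ((k+1).choose 2 : ℝ) := by rw [hself]; push_cast; ring
      _ ≤ (u.esymm k / (k+1:ℝ)) ^ 2 := hsq
      _ = (u.esymm k / (((k+1:ℕ)):ℝ)) ^ 2 := by push_cast; ring

theorem newton_Hms (r : Multiset ℝ) (k : ℕ) (hk : 1 ≤ k) (hk1 : k + 1 ≤ Multiset.card r) :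
    Hms r (k-1) * Hms r (k+1) ≤ Hms r k ^ 2 := by
  obtain ⟨u, hucard, hu⟩ := reduce_step (Multiset.card r - (k+1)) r (k+1) (by omega)
  rw [← hu (k-1) (by omega), ← hu (k+1) (by omega), ← hu k (by omega)]
  exact newton_top u k hk hucard




lemma multiset_prod_comp (s : Multiset (Polynomial ℝ)) (q : Polynomial ℝ) :
    (s.map (·.comp q)).prod = s.prod.comp q := by
  induction s using Multiset.induction with
  | empty => simp
  | cons p s ih => simp [Multiset.prod_cons, Polynomial.mul_comp, ih]

lemma esymm_shift_pos (r : Multiset ℝ) {K : ℕ} (hK : ∀ i, 1 ≤ i → i ≤ K → 0 ≤ r.esymm i)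
    {ε : ℝ} (hε : 0 < ε) {j : ℕ} (hj : 1 ≤ j) (hjK : j ≤ K) (hjc : j ≤ Multiset.card r) :
    0 < (r.map (· + ε)).esymm j := by
  classical
  set c := Multiset.card r with hc
  set P : Polynomial ℝ := (r.map (fun a => X + C a)).prod with hP
  have hmonic : P.Monic := by
    rw [hP]
    apply monic_multiset_prod_of_monic
    intro a _
    exact monic_X_add_C a
  have hdeg : P.natDegree = c := by
    rw [hP, show (r.map (fun a => X + C a)) = ((r.map Neg.neg).map (fun a => X - C a)) by
      rw [Multiset.map_map]; apply Multiset.map_congr rfl; intro a _; simp [sub_neg_eq_add],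
      natDegree_multiset_prod_X_sub_C_eq_card]
    simp [hc]
  have hPcoeff : ∀ t, t ≤ c → P.coeff t = r.esymm (c - t) := by
    intro t ht
    rw [hP, Multiset.prod_X_add_C_coeff r (by omega)]
  have hPcoeff_nonneg : ∀ n, c - j ≤ n → 0 ≤ P.coeff n := by
    intro n hn
    rcases le_or_gt n c with h | h
    · rw [hPcoeff n h]
      rcases Nat.eq_zero_or_pos (c - n) with h0 | h0
      · rw [h0, myEsymm_zero]; norm_num
      · exact hK _ h0 (by omega)
    · rw [Polynomial.coeff_eq_zero_of_natDegree_lt (by omega)]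
  -- identification of shifted esymm with eval of hasse derivative
  have hPε : ((r.map (· + ε)).map (fun a => X + C a)).prod = P.comp (X + C ε) := by
    rw [hP, ← _root_.multiset_prod_comp, Multiset.map_map, Multiset.map_map]
    apply congrArg
    apply Multiset.map_congr rfl
    intro a _
    simp only [Function.comp_apply, Polynomial.add_comp, Polynomial.X_comp, Polynomial.C_comp]
    rw [Polynomial.C_add]
    ring
  have hshift : (r.map (· + ε)).esymm j = (Polynomial.hasseDeriv (c - j) P).eval ε := by
    have h1 : (r.map (· + ε)).esymm j
        = ((r.map (· + ε)).map (fun a => X + C a)).prod.coeff (c - j) := by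
      rw [Multiset.prod_X_add_C_coeff (r.map (· + ε))
        (show c - j ≤ Multiset.card (r.map (· + ε)) by rw [Multiset.card_map, ← hc]; omega)]
      congr 1
      simp only [Multiset.card_map, ← hc]
      omega
    rw [h1, hPε, ← Polynomial.taylor_apply, Polynomial.taylor_coeff]
  rw [hshift]
  set Q := Polynomial.hasseDeriv (c - j) P with hQ
  have hQdeg : Q.natDegree < j + 1 := by
    have h := Polynomial.natDegree_hasseDeriv_le P (c - j)
    rw [hdeg] at h
    rw [hQ]
    omega
  rw [Polynomial.eval_eq_sum_range' hQdeg]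
  have hQco : ∀ n, Q.coeff n = ((n + (c-j)).choose (c-j) : ℝ) * P.coeff (n + (c-j)) :=
    fun n => Polynomial.hasseDeriv_coeff (c-j) P n
  have hterm_nonneg : ∀ i ∈ Finset.range (j+1), 0 ≤ Q.coeff i * ε ^ i := by
    intro i _
    apply mul_nonneg _ (by positivity)
    rw [hQco]
    apply mul_nonneg (by positivity)
    exact hPcoeff_nonneg _ (by omega)
  have htop : 0 < Q.coeff j * ε ^ j := by
    rw [hQco, show j + (c - j) = c by omega, show P.coeff c = 1 from hdeg ▸ hmonic.coeff_natDegree]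
    have : (0:ℝ) < (c.choose (c-j) : ℝ) := by
      exact_mod_cast Nat.choose_pos (by omega)
    positivity
  calc (0:ℝ) < Q.coeff j * ε ^ j := htop
    _ ≤ ∑ i ∈ Finset.range (j+1), Q.coeff i * ε ^ i :=
      Finset.single_le_sum hterm_nonneg (by simp)




lemma esymmR_eq (m : ℕ) (x : Fin m → ℝ) (k : ℕ) :
    esymmR m x k = ((Finset.univ : Finset (Fin m)).val.map x).esymm k :=
  (Finset.esymm_map_val x Finset.univ k).symm

lemma card_univ_map (m : ℕ) (x : Fin m → ℝ) :
    Multiset.card ((Finset.univ : Finset (Fin m)).val.map x) = m := by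
  simp

lemma Hnorm_eq_Hms (m : ℕ) (x : Fin m → ℝ) (k : ℕ) :
    Hnorm m x k = Hms ((Finset.univ : Finset (Fin m)).val.map x) k := by
  unfold Hnorm Hms
  rw [esymmR_eq, card_univ_map]

lemma Hnorm_zero (m : ℕ) (x : Fin m → ℝ) : Hnorm m x 0 = 1 := by
  unfold Hnorm esymmR
  simp

lemma Hnorm_of_gt (m : ℕ) (x : Fin m → ℝ) {k : ℕ} (h : m < k) : Hnorm m x k = 0 := by
  unfold Hnorm
  rw [Nat.choose_eq_zero_of_lt h]
  simp

lemma newton_Hnorm (m : ℕ) (x : Fin m → ℝ) (k : ℕ) (hk : 1 ≤ k) (hk1 : k + 1 ≤ m) :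
    Hnorm m x (k-1) * Hnorm m x (k+1) ≤ Hnorm m x k ^ 2 := by
  rw [Hnorm_eq_Hms, Hnorm_eq_Hms, Hnorm_eq_Hms]
  exact newton_Hms _ k hk (by rw [card_univ_map]; omega)

lemma Hnorm_shift_pos (m : ℕ) (x : Fin m → ℝ) {K : ℕ}
    (hσ : ∀ i, 1 ≤ i → i ≤ K → 0 ≤ esymmR m x i)
    {ε : ℝ} (hε : 0 < ε) {j : ℕ} (hj : 1 ≤ j) (hjK : j ≤ K) (hjm : j ≤ m) :
    0 < Hnorm m (fun i => x i + ε) j := by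
  unfold Hnorm
  apply div_pos
  · rw [esymmR_eq]
    have hmap : (Finset.univ : Finset (Fin m)).val.map (fun i => x i + ε)
        = ((Finset.univ : Finset (Fin m)).val.map x).map (· + ε) := by
      rw [Multiset.map_map]
      rfl
    rw [hmap]
    apply esymm_shift_pos _ _ hε hj hjK (by rw [card_univ_map]; omega)
    intro i hi1 hiK
    rw [← esymmR_eq]
    exact hσ i hi1 hiK
  · exact_mod_cast Nat.choose_pos hjm

lemma Hnorm_nonneg_of (m B : ℕ) (x : Fin m → ℝ)
    (hpos : ∀ j, 1 ≤ j → j ≤ B → j ≤ m → 0 < Hnorm m x j) :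
    ∀ j, j ≤ B → 0 ≤ Hnorm m x j := by
  intro j hj
  rcases Nat.eq_zero_or_pos j with h0 | h1
  · rw [h0, Hnorm_zero]; norm_num
  rcases le_or_gt j m with h | h
  · exact (hpos j h1 hj h).le
  · rw [Hnorm_of_gt m x h]

lemma gap (m B : ℕ) (x : Fin m → ℝ)
    (hpos : ∀ j, 1 ≤ j → j ≤ B → j ≤ m → 0 < Hnorm m x j) :
    ∀ d a, 1 ≤ a → a + d ≤ B →
      Hnorm m x (a-1) * Hnorm m x (a+d) ≤ Hnorm m x a * Hnorm m x (a+d-1) := by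
  have hnn := Hnorm_nonneg_of m B x hpos
  have hpos0 : ∀ j, j ≤ B → j ≤ m → 0 < Hnorm m x j := by
    intro j hjB hjm
    rcases Nat.eq_zero_or_pos j with h0 | h1
    · rw [h0, Hnorm_zero]; norm_num
    · exact hpos j h1 hjB hjm
  intro d
  induction d with
  | zero =>
    intro a ha hB
    rw [show a + 0 = a by omega, show a - 1 = a + 0 - 1 by omega]
    exact le_of_eq (mul_comm _ _)
  | succ d ih =>
    intro a ha hB
    rw [show a + (d+1) - 1 = a + d by omega]
    rcases lt_or_ge m (a + (d+1)) with hgt | hle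
    · rw [Hnorm_of_gt m x hgt, mul_zero]
      exact mul_nonneg (hnn a (by omega)) (hnn (a+d) (by omega))
    · have hnewton := newton_Hnorm m x (a+d) (by omega) (by omega)
      have hih := ih a ha (by omega)
      have P1 : 0 < Hnorm m x (a+d-1) := hpos0 _ (by omega) (by omega)
      have t1 : Hnorm m x (a-1) * (Hnorm m x (a+d-1) * Hnorm m x (a+d+1))
          ≤ Hnorm m x (a-1) * Hnorm m x (a+d) ^ 2 :=
        mul_le_mul_of_nonneg_left hnewton (hnn (a-1) (by omega))
      have t2 : (Hnorm m x (a-1) * Hnorm m x (a+d)) * Hnorm m x (a+d)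
          ≤ (Hnorm m x a * Hnorm m x (a+d-1)) * Hnorm m x (a+d) :=
        mul_le_mul_of_nonneg_right hih (hnn (a+d) (by omega))
      have key : (Hnorm m x (a-1) * Hnorm m x (a + (d+1))) * Hnorm m x (a+d-1)
          ≤ (Hnorm m x a * Hnorm m x (a+d)) * Hnorm m x (a+d-1) := by
        rw [show a + (d+1) = a + d + 1 by omega]
        nlinarith [t1, t2]
      exact le_of_mul_le_mul_right key P1

lemma Yst_zero (m : ℕ) (x : Fin m → ℝ) (s : ℕ) : Yst m x s 0 = Hnorm m x s := by
  unfold Yst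
  simp

lemma Yst_succ (m : ℕ) (x : Fin m → ℝ) (s t : ℕ) :
    Yst m x s (t+1) = Yst m x s t + Yst m x (s+2) t := by
  have e1 : Yst m x s (t+1)
      = (∑ i ∈ Finset.range (t+1), ((t+1).choose (i+1) : ℝ) * Hnorm m x (s + 2*(t+1) - 2*(i+1)))
        + ((t+1).choose 0 : ℝ) * Hnorm m x (s + 2*(t+1) - 2*0) := by
    unfold Yst
    exact Finset.sum_range_succ' _ (t+1)
  have e2 : ∀ i ∈ Finset.range (t+1),
      ((t+1).choose (i+1) : ℝ) * Hnorm m x (s + 2*(t+1) - 2*(i+1))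
      = (t.choose i : ℝ) * Hnorm m x (s + 2*t - 2*i)
        + (t.choose (i+1) : ℝ) * Hnorm m x (s + 2*t - 2*i) := by
    intro i _
    rw [show s + 2*(t+1) - 2*(i+1) = s + 2*t - 2*i by omega, Nat.choose_succ_succ]
    push_cast
    ring
  have e3 : (∑ i ∈ Finset.range (t+1), ((t+1).choose (i+1) : ℝ) * Hnorm m x (s + 2*(t+1) - 2*(i+1)))
      = (∑ i ∈ Finset.range (t+1), (t.choose i : ℝ) * Hnorm m x (s + 2*t - 2*i))
        + (∑ i ∈ Finset.range (t+1), (t.choose (i+1) : ℝ) * Hnorm m x (s + 2*t - 2*i)) := by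
    rw [Finset.sum_congr rfl e2, Finset.sum_add_distrib]
  have e4 : (∑ i ∈ Finset.range (t+1), (t.choose (i+1) : ℝ) * Hnorm m x (s + 2*t - 2*i))
      = (∑ i ∈ Finset.range t, (t.choose (i+1) : ℝ) * Hnorm m x (s + 2*t - 2*i))
        + (t.choose (t+1) : ℝ) * Hnorm m x (s + 2*t - 2*t) :=
    Finset.sum_range_succ _ t
  have e5 : Yst m x (s+2) t
      = (∑ i ∈ Finset.range t, (t.choose (i+1) : ℝ) * Hnorm m x (s + 2 + 2*t - 2*(i+1)))
        + (t.choose 0 : ℝ) * Hnorm m x (s + 2 + 2*t - 2*0) := by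
    unfold Yst
    match t with
    | 0 => simp
    | (t'+1) => exact Finset.sum_range_succ' _ (t'+1)
  have e6 : ∀ i ∈ Finset.range t,
      (t.choose (i+1) : ℝ) * Hnorm m x (s + 2 + 2*t - 2*(i+1))
      = (t.choose (i+1) : ℝ) * Hnorm m x (s + 2*t - 2*i) := by
    intro i _
    rw [show s + 2 + 2*t - 2*(i+1) = s + 2*t - 2*i by omega]
  have e6' : (∑ i ∈ Finset.range t, (t.choose (i+1) : ℝ) * Hnorm m x (s + 2 + 2*t - 2*(i+1)))
      = ∑ i ∈ Finset.range t, (t.choose (i+1) : ℝ) * Hnorm m x (s + 2*t - 2*i) :=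
    Finset.sum_congr rfl e6
  have e7 : Hnorm m x (s + 2*(t+1) - 2*0) = Hnorm m x (s + 2 + 2*t - 2*0) := by
    rw [show s + 2*(t+1) - 2*0 = s + 2 + 2*t - 2*0 by omega]
  have hYs : Yst m x s t = ∑ i ∈ Finset.range (t+1), (t.choose i : ℝ) * Hnorm m x (s + 2*t - 2*i) := rfl
  rw [e1, e3, e4, e5, e6', e7, hYs]
  simp [Nat.choose_succ_self]
  ring
lemma key (m B : ℕ) (x : Fin m → ℝ)
    (hpos : ∀ j, 1 ≤ j → j ≤ B → j ≤ m → 0 < Hnorm m x j) :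
    ∀ t u s, 1 ≤ s → s + 2*u + 2 + 2*t ≤ B →
      Yst m x (s-1) t * Yst m x (s + (2*u+2)) t ≤ Yst m x s t * Yst m x (s + (2*u+1)) t := by
  intro t
  induction t with
  | zero =>
    intro u s hs hB
    rw [Yst_zero, Yst_zero, Yst_zero, Yst_zero]
    have h := gap m B x hpos (2*u+2) s hs (by omega)
    rw [show s + (2*u+2) - 1 = s + (2*u+1) by omega] at h
    exact h
  | succ t ih =>
    intro u s hs hB
    rw [Yst_succ, Yst_succ, Yst_succ, Yst_succ]
    rw [show s - 1 + 2 = s + 1 by omega]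
    have I1 := ih u s hs (by omega)
    have I2 := ih (u+1) s hs (by omega)
    rw [show s + (2*(u+1)+2) = s + (2*u+2) + 2 by omega,
        show s + (2*(u+1)+1) = s + (2*u+1) + 2 by omega] at I2
    have I3 := ih u (s+2) (by omega) (by omega)
    rw [show s + 2 - 1 = s + 1 by omega,
        show s + 2 + (2*u+2) = s + (2*u+2) + 2 by omega,
        show s + 2 + (2*u+1) = s + (2*u+1) + 2 by omega] at I3
    have I4 : Yst m x (s+1) t * Yst m x (s + (2*u+2)) t
        ≤ Yst m x (s+2) t * Yst m x (s + (2*u+1)) t := by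
      cases u with
      | zero =>
        rw [show s + (2*0+2) = s + 2 by omega, show s + (2*0+1) = s + 1 by omega]
        exact le_of_eq (mul_comm _ _)
      | succ u' =>
        have I4' := ih u' (s+2) (by omega) (by omega)
        rw [show s + 2 - 1 = s + 1 by omega,
            show s + 2 + (2*u'+2) = s + (2*(u'+1)+2) by omega,
            show s + 2 + (2*u'+1) = s + (2*(u'+1)+1) by omega] at I4'
        exact I4'
    nlinarith [I1, I2, I3, I4]

/-- If `σ_m(λ) ≥ 0` for `1 ≤ m ≤ min(s+2t+2, n−1)`, then for `s ≥ 1`, `t ≥ 0`,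
`Y_{s,t} Y_{s+1,t} ≥ Y_{s−1,t} Y_{s+2,t}`. -/
theorem stmt_16 (n : ℕ) (hn : 3 ≤ n) (s t : ℕ) (hs : 1 ≤ s)
    (lam : Fin (n - 1) → ℝ)
    (hσ : ∀ m : ℕ, 1 ≤ m → m ≤ min (s + 2 * t + 2) (n - 1) → 0 ≤ esymmR (n - 1) lam m) :
    Yst (n - 1) lam (s - 1) t * Yst (n - 1) lam (s + 2) t ≤
      Yst (n - 1) lam s t * Yst (n - 1) lam (s + 1) t := by
  have hcont : ∀ (a : ℕ), Continuous (fun ε : ℝ => Yst (n-1) (fun i => lam i + ε) a t) := by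
    intro a
    unfold Yst Hnorm esymmR
    apply continuous_finset_sum
    intro i _
    apply Continuous.mul continuous_const
    apply Continuous.div_const
    apply continuous_finset_sum
    intro S _
    apply continuous_finset_prod
    intro j _
    exact continuous_const.add continuous_id
  set F : ℝ → ℝ := fun ε =>
    Yst (n-1) (fun i => lam i + ε) s t * Yst (n-1) (fun i => lam i + ε) (s+1) t
    - Yst (n-1) (fun i => lam i + ε) (s-1) t * Yst (n-1) (fun i => lam i + ε) (s+2) t with hF
  have hFc : Continuous F := ((hcont s).mul (hcont (s+1))).sub ((hcont (s-1)).mul (hcont (s+2)))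
  have hFpos : ∀ ε ∈ Set.Ioi (0:ℝ), 0 ≤ F ε := by
    intro ε hε
    rw [Set.mem_Ioi] at hε
    have hpos : ∀ j, 1 ≤ j → j ≤ s + 2*t + 2 → j ≤ n-1 →
        0 < Hnorm (n-1) (fun i => lam i + ε) j := by
      intro j h1 h2 h3
      exact Hnorm_shift_pos (n-1) lam (K := min (s + 2*t + 2) (n-1))
        (fun i hi1 hi2 => hσ i hi1 hi2) hε h1 (by omega) h3
    have hk := key (n-1) (s + 2*t + 2) (fun i => lam i + ε) hpos t 0 s hs (by omega)
    rw [show s + (2*0+2) = s + 2 by omega, show s + (2*0+1) = s + 1 by omega] at hk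
    simp only [hF]
    linarith [hk]
  have hT : Filter.Tendsto F (nhdsWithin 0 (Set.Ioi 0)) (nhds (F 0)) :=
    (hFc.tendsto 0).mono_left nhdsWithin_le_nhds
  have h0 : 0 ≤ F 0 := ge_of_tendsto hT (eventually_nhdsWithin_of_forall hFpos)
  have hlam : (fun i => lam i + (0:ℝ)) = lam := funext fun i => add_zero _
  simp only [hF, hlam] at h0
  linarith [h0]
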